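/- Fix µ ≠ 0 and x > 0, and for t > 0, 0 < x, y let q_t(x,y) = (sinh(µy)/sinh(µx))·(e^{−µ²t/2}/√(2πt))·(exp(−(y−x)²/(2t)) − exp(−(y+x)²/(2t))). Then q_t satisfies the Fokker–Planck equation ∂q_t/∂t = −∂/∂y( µ·coth(µy)·q_t ) + (1/2)·∂²q_t/∂y² for all t > 0 and x, y > 0. -/

import Mathlib

open Real

/-- The transition density of Brownian motion with drift `-μ` Doob-conditioned to hit
`+∞` before `0`. -/
noncomputable def qdens (μ x : ℝ) (t y : ℝ) : ℝ :=
  (Real.sinh (μ * y) / Real.sinh (μ * x)) *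
    (Real.exp (-(μ ^ 2) * t / 2) / Real.sqrt (2 * π * t)) *
    (Real.exp (-(y - x) ^ 2 / (2 * t)) - Real.exp (-(y + x) ^ 2 / (2 * t)))

/-- First space derivative of `qdens`. -/
noncomputable def qd1 (μ x t z : ℝ) : ℝ :=
  Real.exp (-(μ ^ 2) * t / 2) / Real.sqrt (2 * π * t) / Real.sinh (μ * x) *
    (μ * Real.cosh (μ * z) *
        (Real.exp (-(z - x) ^ 2 / (2 * t)) - Real.exp (-(z + x) ^ 2 / (2 * t)))
      + Real.sinh (μ * z) *
        (-((z - x) / t) * Real.exp (-(z - x) ^ 2 / (2 * t))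
          + (z + x) / t * Real.exp (-(z + x) ^ 2 / (2 * t))))

lemma aux_sqrt_ne (t : ℝ) (ht : 0 < t) : Real.sqrt (2 * π * t) ≠ 0 :=
  ne_of_gt (Real.sqrt_pos.mpr (by have := Real.pi_pos; positivity))

lemma hasDerivAt_B (μ t : ℝ) (ht : 0 < t) :
    HasDerivAt (fun s : ℝ => Real.exp (-(μ ^ 2) * s / 2) / Real.sqrt (2 * π * s))
      (Real.exp (-(μ ^ 2) * t / 2) / Real.sqrt (2 * π * t) * (-(μ ^ 2) / 2 - 1 / (2 * t)))
      t := by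
  have hπ : (0:ℝ) < π := Real.pi_pos
  have h2t : (0:ℝ) < 2 * π * t := by positivity
  have hs : (0:ℝ) < Real.sqrt (2 * π * t) := Real.sqrt_pos.mpr h2t
  have hE : HasDerivAt (fun s : ℝ => Real.exp (-(μ ^ 2) * s / 2))
      (Real.exp (-(μ ^ 2) * t / 2) * (-(μ ^ 2) * 1 / 2)) t :=
    (((hasDerivAt_id t).const_mul (-(μ ^ 2))).div_const 2).exp
  have hS : HasDerivAt (fun s : ℝ => Real.sqrt (2 * π * s))
      ((2 * π * 1) / (2 * Real.sqrt (2 * π * t))) t :=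
    ((hasDerivAt_id t).const_mul (2 * π)).sqrt (by positivity)
  have h := hE.div hS hs.ne'
  refine h.congr_deriv ?_
  have hs2 : Real.sqrt (2 * π * t) ^ 2 = 2 * π * t := Real.sq_sqrt h2t.le
  set s := Real.sqrt (2 * π * t) with hsdef
  have htt : t = s ^ 2 / (2 * π) := by rw [hs2]; field_simp
  rw [htt]
  field_simp

lemma qdens_hasDerivAt_t (μ x y t : ℝ) (ht : 0 < t) :
    HasDerivAt (fun s => qdens μ x s y)
      ((Real.sinh (μ * y) / Real.sinh (μ * x)) *
        (Real.exp (-(μ ^ 2) * t / 2) / Real.sqrt (2 * π * t)) *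
        ((-(μ ^ 2) / 2 - 1 / (2 * t)) *
            (Real.exp (-(y - x) ^ 2 / (2 * t)) - Real.exp (-(y + x) ^ 2 / (2 * t)))
          + (y - x) ^ 2 / (2 * t ^ 2) * Real.exp (-(y - x) ^ 2 / (2 * t))
          - (y + x) ^ 2 / (2 * t ^ 2) * Real.exp (-(y + x) ^ 2 / (2 * t)))) t := by
  have hπ : (0:ℝ) < π := Real.pi_pos
  have hsq : Real.sqrt (2 * π * t) ≠ 0 := aux_sqrt_ne t ht
  have hB := hasDerivAt_B μ t ht
  have hg1 : HasDerivAt (fun s : ℝ => Real.exp (-(y - x) ^ 2 / (2 * s)))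
      (Real.exp (-(y - x) ^ 2 / (2 * t)) *
        ((0 * (2 * t) - -(y - x) ^ 2 * (2 * 1)) / (2 * t) ^ 2)) t :=
    ((hasDerivAt_const t (-(y - x) ^ 2)).div ((hasDerivAt_id t).const_mul 2)
      (by positivity)).exp
  have hg2 : HasDerivAt (fun s : ℝ => Real.exp (-(y + x) ^ 2 / (2 * s)))
      (Real.exp (-(y + x) ^ 2 / (2 * t)) *
        ((0 * (2 * t) - -(y + x) ^ 2 * (2 * 1)) / (2 * t) ^ 2)) t :=
    ((hasDerivAt_const t (-(y + x) ^ 2)).div ((hasDerivAt_id t).const_mul 2)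
      (by positivity)).exp
  have h := (hB.const_mul (Real.sinh (μ * y) / Real.sinh (μ * x))).mul (hg1.sub hg2)
  simp only [qdens]
  refine h.congr_deriv ?_
  simp only [Pi.sub_apply]
  rcases eq_or_ne (Real.sinh (μ * x)) 0 with hK | hK
  · field_simp [hK]
    ring
  · field_simp
    ring

lemma qdens_hasDerivAt_y (μ x t : ℝ) (ht : 0 < t) (z : ℝ) :
    HasDerivAt (fun z => qdens μ x t z) (qd1 μ x t z) z := by
  have hsinh : HasDerivAt (fun z : ℝ => Real.sinh (μ * z))
      (Real.cosh (μ * z) * (μ * 1)) z := ((hasDerivAt_id z).const_mul μ).sinh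
  have hg1 : HasDerivAt (fun z : ℝ => Real.exp (-(z - x) ^ 2 / (2 * t)))
      (Real.exp (-(z - x) ^ 2 / (2 * t)) *
        (-((2 : ℕ) * (z - x) ^ (2 - 1) * 1) / (2 * t))) z :=
    ((((hasDerivAt_id z).sub_const x).pow 2).neg.div_const (2 * t)).exp
  have hg2 : HasDerivAt (fun z : ℝ => Real.exp (-(z + x) ^ 2 / (2 * t)))
      (Real.exp (-(z + x) ^ 2 / (2 * t)) *
        (-((2 : ℕ) * (z + x) ^ (2 - 1) * 1) / (2 * t))) z :=
    ((((hasDerivAt_id z).add_const x).pow 2).neg.div_const (2 * t)).exp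
  have h := ((hsinh.div_const (Real.sinh (μ * x))).mul_const
      (Real.exp (-(μ ^ 2) * t / 2) / Real.sqrt (2 * π * t))).mul (hg1.sub hg2)
  simp only [qdens, qd1]
  refine h.congr_deriv ?_
  simp only [Pi.sub_apply]
  have hsq : Real.sqrt (2 * π * t) ≠ 0 := aux_sqrt_ne t ht
  rcases eq_or_ne (Real.sinh (μ * x)) 0 with hK | hK
  · simp [hK]
  · field_simp
    ring

lemma qd1_hasDerivAt (μ x t y : ℝ) (ht : 0 < t) :
    HasDerivAt (fun z => qd1 μ x t z)
      (Real.exp (-(μ ^ 2) * t / 2) / Real.sqrt (2 * π * t) / Real.sinh (μ * x) *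
        (μ ^ 2 * Real.sinh (μ * y) *
            (Real.exp (-(y - x) ^ 2 / (2 * t)) - Real.exp (-(y + x) ^ 2 / (2 * t)))
          + 2 * μ * Real.cosh (μ * y) *
            (-((y - x) / t) * Real.exp (-(y - x) ^ 2 / (2 * t))
              + (y + x) / t * Real.exp (-(y + x) ^ 2 / (2 * t)))
          + Real.sinh (μ * y) *
            (((y - x) ^ 2 / t ^ 2 - 1 / t) * Real.exp (-(y - x) ^ 2 / (2 * t))
              - ((y + x) ^ 2 / t ^ 2 - 1 / t) * Real.exp (-(y + x) ^ 2 / (2 * t))))) y := by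
  have hsinh : HasDerivAt (fun z : ℝ => Real.sinh (μ * z))
      (Real.cosh (μ * y) * (μ * 1)) y := ((hasDerivAt_id y).const_mul μ).sinh
  have hcosh : HasDerivAt (fun z : ℝ => Real.cosh (μ * z))
      (Real.sinh (μ * y) * (μ * 1)) y := ((hasDerivAt_id y).const_mul μ).cosh
  have hg1 : HasDerivAt (fun z : ℝ => Real.exp (-(z - x) ^ 2 / (2 * t)))
      (Real.exp (-(y - x) ^ 2 / (2 * t)) *
        (-((2 : ℕ) * (y - x) ^ (2 - 1) * 1) / (2 * t))) y :=
    ((((hasDerivAt_id y).sub_const x).pow 2).neg.div_const (2 * t)).exp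
  have hg2 : HasDerivAt (fun z : ℝ => Real.exp (-(z + x) ^ 2 / (2 * t)))
      (Real.exp (-(y + x) ^ 2 / (2 * t)) *
        (-((2 : ℕ) * (y + x) ^ (2 - 1) * 1) / (2 * t))) y :=
    ((((hasDerivAt_id y).add_const x).pow 2).neg.div_const (2 * t)).exp
  have h1 : HasDerivAt (fun z : ℝ => -((z - x) / t)) (-(1 / t)) y :=
    (((hasDerivAt_id y).sub_const x).div_const t).neg
  have h2 : HasDerivAt (fun z : ℝ => (z + x) / t) (1 / t) y :=
    ((hasDerivAt_id y).add_const x).div_const t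
  have hf := (hcosh.const_mul μ).mul (hg1.sub hg2)
  have hg := hsinh.mul ((h1.mul hg1).add (h2.mul hg2))
  have h := (hf.add hg).const_mul
    (Real.exp (-(μ ^ 2) * t / 2) / Real.sqrt (2 * π * t) / Real.sinh (μ * x))
  simp only [qd1]
  refine h.congr_deriv ?_
  simp only [Pi.sub_apply, Pi.add_apply, Pi.mul_apply]
  have hsq : Real.sqrt (2 * π * t) ≠ 0 := aux_sqrt_ne t ht
  rcases eq_or_ne (Real.sinh (μ * x)) 0 with hK | hK
  · simp [hK]
  · field_simp
    ring

theorem stmt_19 (μ x : ℝ) (hμ : μ ≠ 0) (hx : 0 < x) :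
    ∀ t y : ℝ, 0 < t → 0 < y →
      deriv (fun s => qdens μ x s y) t
        = -(deriv (fun z => μ * (Real.cosh (μ * z) / Real.sinh (μ * z)) * qdens μ x t z) y)
          + (1 / 2) * deriv (deriv (fun z => qdens μ x t z)) y := by
  intro t y ht hy
  have hπ : (0:ℝ) < π := Real.pi_pos
  have hsq : Real.sqrt (2 * π * t) ≠ 0 := aux_sqrt_ne t ht
  have hK : Real.sinh (μ * x) ≠ 0 := Real.sinh_ne_zero.mpr (mul_ne_zero hμ hx.ne')
  -- time derivative
  rw [(qdens_hasDerivAt_t μ x y t ht).deriv]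
  -- second space derivative
  have hd1 : deriv (fun z => qdens μ x t z) = fun z => qd1 μ x t z :=
    funext fun z => (qdens_hasDerivAt_y μ x t ht z).deriv
  rw [hd1, (qd1_hasDerivAt μ x t y ht).deriv]
  -- drift term
  have hev : (fun z => μ * (Real.cosh (μ * z) / Real.sinh (μ * z)) * qdens μ x t z)
      =ᶠ[nhds y] (fun z => μ * Real.cosh (μ * z) *
        (Real.exp (-(μ ^ 2) * t / 2) / Real.sqrt (2 * π * t) / Real.sinh (μ * x) *
          (Real.exp (-(z - x) ^ 2 / (2 * t)) - Real.exp (-(z + x) ^ 2 / (2 * t))))) := by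
    filter_upwards [Ioi_mem_nhds hy] with z hz
    have hSz : Real.sinh (μ * z) ≠ 0 := Real.sinh_ne_zero.mpr (mul_ne_zero hμ (ne_of_gt hz))
    simp only [qdens]
    field_simp
  rw [hev.deriv_eq]
  have hcosh : HasDerivAt (fun z : ℝ => Real.cosh (μ * z))
      (Real.sinh (μ * y) * (μ * 1)) y := ((hasDerivAt_id y).const_mul μ).cosh
  have hg1 : HasDerivAt (fun z : ℝ => Real.exp (-(z - x) ^ 2 / (2 * t)))
      (Real.exp (-(y - x) ^ 2 / (2 * t)) *
        (-((2 : ℕ) * (y - x) ^ (2 - 1) * 1) / (2 * t))) y :=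
    ((((hasDerivAt_id y).sub_const x).pow 2).neg.div_const (2 * t)).exp
  have hg2 : HasDerivAt (fun z : ℝ => Real.exp (-(z + x) ^ 2 / (2 * t)))
      (Real.exp (-(y + x) ^ 2 / (2 * t)) *
        (-((2 : ℕ) * (y + x) ^ (2 - 1) * 1) / (2 * t))) y :=
    ((((hasDerivAt_id y).add_const x).pow 2).neg.div_const (2 * t)).exp
  have hdr := (hcosh.const_mul μ).mul ((hg1.sub hg2).const_mul
    (Real.exp (-(μ ^ 2) * t / 2) / Real.sqrt (2 * π * t) / Real.sinh (μ * x)))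
  rw [HasDerivAt.deriv (f := fun z => μ * Real.cosh (μ * z) *
    (Real.exp (-(μ ^ 2) * t / 2) / Real.sqrt (2 * π * t) / Real.sinh (μ * x) *
      (Real.exp (-(z - x) ^ 2 / (2 * t)) - Real.exp (-(z + x) ^ 2 / (2 * t))))) hdr]
  simp only [Pi.sub_apply]
  field_simp
  ring
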